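/- Let $g_r \in \mathbb{Z}_2[w_2,w_3,w_4]$ be defined by $g_0=1$, $g_{-1}=g_{-2}=g_{-3}=0$, and $g_r = w_2 g_{r-2} + w_3 g_{r-3} + w_4 g_{r-4}$ for $r\geq 1$. Then for all integers $r \geq -3$ and all $i\geq 0$, $w_3^{2^i-1} g_r^{2^i} = g_{2^i(r+3)-3}$. -/
import Mathlib

open MvPolynomial

lemma sq3' (a b c : MvPolynomial (Fin 3) (ZMod 2)) :
    (a + b + c) ^ 2 = a ^ 2 + b ^ 2 + c ^ 2 := by
  rw [add_pow_char, add_pow_char]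

lemma tz' (x : MvPolynomial (Fin 3) (ZMod 2)) : x + x = 0 := by
  have h : (2 : MvPolynomial (Fin 3) (ZMod 2)) = 0 :=
    CharP.cast_eq_zero (MvPolynomial (Fin 3) (ZMod 2)) 2
  linear_combination h * x

/-- In `ℤ₂[w₂,w₃,w₄]` (with `X 0 = w₂`, `X 1 = w₃`, `X 2 = w₄`), with
`g₀ = 1`, `g_{-1} = g_{-2} = g_{-3} = 0` and `g_r = w₂ g_{r-2} + w₃ g_{r-3} + w₄ g_{r-4}`
for `r ≥ 1`, we have `w₃^{2^i - 1} g_r^{2^i} = g_{2^i(r+3)-3}` for all `r ≥ -3`, `i ≥ 0`. -/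
theorem stmt_3 (g : ℤ → MvPolynomial (Fin 3) (ZMod 2))
    (hneg : ∀ r : ℤ, -3 ≤ r → r < 0 → g r = 0)
    (h0 : g 0 = 1)
    (hrec : ∀ r : ℤ, 1 ≤ r →
      g r = X 0 * g (r - 2) + X 1 * g (r - 3) + X 2 * g (r - 4)) :
    ∀ (r : ℤ), -3 ≤ r → ∀ (i : ℕ),
      (X 1 : MvPolynomial (Fin 3) (ZMod 2)) ^ (2 ^ i - 1) * (g r) ^ (2 ^ i) =
        g (2 ^ i * (r + 3) - 3) := by
  have hm1 : g (-1) = 0 := hneg _ (by norm_num) (by norm_num)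
  have hm2 : g (-2) = 0 := hneg _ (by norm_num) (by norm_num)
  have hm3 : g (-3) = 0 := hneg _ (by norm_num) (by norm_num)
  have h1 : g 1 = 0 := by
    have h := hrec 1 (by norm_num)
    norm_num [hm1, hm2, hm3] at h
    exact h
  have key : ∀ r : ℤ, -3 ≤ r → X 1 * (g r) ^ 2 = g (2 * r + 3) := by
    have main : ∀ n : ℕ, X 1 * (g ((n : ℤ) - 3)) ^ 2 = g (2 * ((n : ℤ) - 3) + 3) := by
      intro n
      induction n using Nat.strong_induction_on with
      | _ n ih =>
        match n, ih with
        | 0, ih => norm_num [hm3]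
        | 1, ih => norm_num [hm1, hm2]
        | 2, ih => norm_num [hm1, h1]
        | 3, ih =>
          have h3 : g 3 = X 1 := by
            have h := hrec 3 (by norm_num)
            norm_num [h1, hm1, h0] at h
            exact h
          norm_num [h0, h3]
        | (m + 4), ih =>
          have ihA := ih (m + 2) (by omega)
          have ihB := ih (m + 1) (by omega)
          have ihC := ih m (by omega)
          have e0 := hrec ((m : ℤ) + 1) (by omega)
          have e1 := hrec (2 * (m : ℤ) + 5) (by omega)
          have e2 := hrec (2 * (m : ℤ) + 3) (by omega)
          have e3 := hrec (2 * (m : ℤ) + 2) (by omega)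
          have e4 := hrec (2 * (m : ℤ) + 1) (by omega)
          push_cast at ihA ihB ihC ⊢
          rw [show (2 * ((m : ℤ) + 4 - 3) + 3) = 2 * (m : ℤ) + 5 by ring,
              show ((m : ℤ) + 4 - 3) = (m : ℤ) + 1 by ring]
          rw [show (2 * ((m : ℤ) + 2 - 3) + 3) = 2 * (m : ℤ) + 1 by ring,
              show ((m : ℤ) + 2 - 3) = (m : ℤ) + 1 - 2 by ring] at ihA
          rw [show (2 * ((m : ℤ) + 1 - 3) + 3) = 2 * (m : ℤ) - 1 by ring] at ihB
          rw [show (2 * ((m : ℤ) - 3) + 3) = 2 * (m : ℤ) - 3 by ring,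
              show ((m : ℤ) - 3) = (m : ℤ) + 1 - 4 by ring] at ihC
          rw [show (2 * (m : ℤ) + 5 - 2) = 2 * (m : ℤ) + 3 by ring,
              show (2 * (m : ℤ) + 5 - 3) = 2 * (m : ℤ) + 2 by ring,
              show (2 * (m : ℤ) + 5 - 4) = 2 * (m : ℤ) + 1 by ring] at e1
          rw [show (2 * (m : ℤ) + 3 - 2) = 2 * (m : ℤ) + 1 by ring,
              show (2 * (m : ℤ) + 3 - 3) = 2 * (m : ℤ) by ring,
              show (2 * (m : ℤ) + 3 - 4) = 2 * (m : ℤ) - 1 by ring] at e2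
          rw [show (2 * (m : ℤ) + 2 - 2) = 2 * (m : ℤ) by ring,
              show (2 * (m : ℤ) + 2 - 3) = 2 * (m : ℤ) - 1 by ring,
              show (2 * (m : ℤ) + 2 - 4) = 2 * (m : ℤ) - 2 by ring] at e3
          rw [show (2 * (m : ℤ) + 1 - 2) = 2 * (m : ℤ) - 1 by ring,
              show (2 * (m : ℤ) + 1 - 3) = 2 * (m : ℤ) - 2 by ring,
              show (2 * (m : ℤ) + 1 - 4) = 2 * (m : ℤ) - 3 by ring] at e4
          rw [e0, sq3', e1, e2, e3, e4, mul_pow, mul_pow, mul_pow]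
          linear_combination (X 0 : MvPolynomial (Fin 3) (ZMod 2)) ^ 2 * ihA + (X 0 : MvPolynomial (Fin 3) (ZMod 2)) ^ 2 * e4 +
            (X 1 : MvPolynomial (Fin 3) (ZMod 2)) ^ 2 * ihB +
            (X 2 : MvPolynomial (Fin 3) (ZMod 2)) ^ 2 * ihC -
            tz' (X 0 * X 1 * g (2 * (m : ℤ))) -
            tz' (X 0 * X 2 * g (2 * (m : ℤ) - 1)) -
            tz' (X 1 * X 2 * g (2 * (m : ℤ) - 2))
    intro r hr
    obtain ⟨n, hn⟩ := Int.le.dest hr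
    have h := main n
    rw [show ((n : ℤ) - 3) = r by omega] at h
    exact h
  intro r hr i
  induction i with
  | zero => norm_num
  | succ i ih =>
    have hnn : (0 : ℤ) ≤ 2 ^ i * (r + 3) := mul_nonneg (by positivity) (by omega)
    have hr2 : (-3 : ℤ) ≤ 2 ^ i * (r + 3) - 3 := by omega
    have k := key _ hr2
    rw [← ih] at k
    rw [show (2 * (2 ^ i * (r + 3) - 3) + 3 : ℤ) = 2 ^ (i + 1) * (r + 3) - 3 by ring] at k
    have hp : (1 : ℕ) ≤ 2 ^ i := Nat.one_le_two_pow
    have hp2 : (2 : ℕ) ^ (i + 1) = 2 ^ i * 2 := by rw [pow_succ]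
    rw [show 2 ^ (i + 1) - 1 = (2 ^ i - 1) * 2 + 1 from by omega, hp2,
        pow_add, pow_mul, pow_mul, pow_one, ← k]
    ring
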